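/- Let [e_1,...,e_r] be an HJ continued fraction with all e_j ≥ 2, let 1 < i ≤ r, and set n/a = [e_1,...,e_{i-1}] and n/(n-a) = [x_1,...,x_u]. Then the sequence [e_1,...,e_{i-1}+x_u, x_{u-1},...,x_1, 1, e_1,...,e_r] blows down (by iterated contraction of 1's) to [e_1,...,e_{i-1}, e_i - 1, e_{i+1},...,e_r]. -/

import Mathlib

/-- The value of a Hirzebruch–Jung continued fraction `[e₁,…,e_r]`,
computed as `e₁ - 1/[e₂,…,e_r]` with `[e_r] = e_r`. -/
def hjVal : List ℤ → ℚ
  | [] => 0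
  | [x] => (x : ℚ)
  | x :: y :: xs => (x : ℚ) - (hjVal (y :: xs))⁻¹

/-- `IsHJ m q L` : `L` is the HJ continued fraction expansion of `m/q`
(all entries at least 2 and value `m/q`). -/
def IsHJ (m q : ℤ) (L : List ℤ) : Prop :=
  (∀ e ∈ L, 2 ≤ e) ∧ hjVal L = (m : ℚ) / (q : ℚ)

/-- `IsWahlChain n a L` : `L` is the Wahl chain of `n²/(na-1)` for coprime `0 < a < n`. -/
def IsWahlChain (n a : ℤ) (L : List ℤ) : Prop :=
  0 < a ∧ a < n ∧ Int.gcd n a = 1 ∧ IsHJ (n ^ 2) (n * a - 1) L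

/-- One blow-down move on a chain: `[…,u,1,v,…] ↦ […,u-1,v-1,…]`,
including the boundary cases `[1,v,…] ↦ [v-1,…]` and `[…,u,1] ↦ […,u-1]`. -/
inductive BDStep : List ℤ → List ℤ → Prop
  | mid (l r : List ℤ) (u v : ℤ) :
      BDStep (l ++ u :: 1 :: v :: r) (l ++ (u - 1) :: (v - 1) :: r)
  | left (r : List ℤ) (v : ℤ) : BDStep (1 :: v :: r) ((v - 1) :: r)
  | right (l : List ℤ) (u : ℤ) : BDStep (l ++ [u, 1]) (l ++ [u - 1])

/-- A zero continued fraction: a chain that blows down to `[1,1]`. -/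
def IsZCF (L : List ℤ) : Prop :=
  Relation.ReflTransGen BDStep L [1, 1]

/-- `AdmitsZCF L lam` : one can decrease some entries of `L` by positive integers
with total sum `lam + 1` so that the result is a zero continued fraction. -/
def AdmitsZCF (L : List ℤ) (lam : ℤ) : Prop :=
  ∃ K : List ℤ, K.length = L.length ∧ (∀ i : ℕ, K.getD i 0 ≤ L.getD i 0) ∧
    L.sum - K.sum = lam + 1 ∧ IsZCF K

lemma hjVal_cons (x : ℤ) (L : List ℤ) : hjVal (x :: L) = (x : ℚ) - (hjVal L)⁻¹ := by
  cases L with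
  | nil => simp [hjVal]
  | cons y ys => rfl

lemma hjVal_gt_one : ∀ (L : List ℤ), L ≠ [] → (∀ e ∈ L, 2 ≤ e) → 1 < hjVal L := by
  intro L
  induction L with
  | nil => intro h; exact absurd rfl h
  | cons x xs ih =>
    intro _ h
    have hx : (2 : ℚ) ≤ (x : ℚ) := by exact_mod_cast h x (List.mem_cons_self)
    rw [hjVal_cons]
    rcases eq_or_ne xs [] with rfl | h0
    · simp [hjVal]; linarith
    · have ht := ih h0 (fun e he => h e (List.mem_cons_of_mem _ he))
      have h1 : (hjVal xs)⁻¹ < 1 := inv_lt_one_of_one_lt₀ ht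
      have h2 : 0 < (hjVal xs)⁻¹ := inv_pos.mpr (by linarith)
      linarith

lemma hjVal_inv_nonneg (L : List ℤ) (h : ∀ e ∈ L, 2 ≤ e) : 0 ≤ (hjVal L)⁻¹ := by
  rcases eq_or_ne L [] with rfl | hne
  · simp [hjVal]
  · have := hjVal_gt_one L hne h
    exact le_of_lt (inv_pos.mpr (by linarith))

lemma hjVal_inv_lt_one (L : List ℤ) (hne : L ≠ []) (h : ∀ e ∈ L, 2 ≤ e) :
    (hjVal L)⁻¹ < 1 :=
  inv_lt_one_of_one_lt₀ (hjVal_gt_one L hne h)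

lemma isHJ_ne_nil {n q : ℤ} {L : List ℤ} (h : IsHJ n q L) (h1 : 0 < q) (h2 : q < n) :
    L ≠ [] := by
  rintro rfl
  have h0 : hjVal ([] : List ℤ) = 0 := rfl
  rw [h0] at *
  have : (0:ℚ) < (n : ℚ) / (q : ℚ) := by
    apply div_pos <;> [exact_mod_cast (h1.trans h2); exact_mod_cast h1]
  rw [← h.2] at this
  exact lt_irrefl 0 this

lemma gcd_one_linear (m q e : ℤ) (h : Int.gcd m q = 1) : Int.gcd q (e * q - m) = 1 := by
  rw [← Int.isCoprime_iff_gcd_eq_one] at h ⊢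
  have : IsCoprime q (-m + q * e) := (h.symm.neg_right).add_mul_left_right e
  have he : e * q - m = -m + q * e := by ring
  rwa [he]

lemma gcd_neg_right (m q : ℤ) : Int.gcd m (-q) = Int.gcd m q := by
  simp [Int.gcd]

lemma isHJ_singleton {n a x : ℤ} (h : IsHJ n a [x]) (ha : 0 < a)
    (hcop : Int.gcd n a = 1) : a = 1 ∧ x = n := by
  have hv : (x : ℚ) = (n : ℚ) / (a : ℚ) := h.2
  have ha0 : (a : ℚ) ≠ 0 := by exact_mod_cast ha.ne'
  have hxa : (x * a : ℤ) = n := by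
    have : (x : ℚ) * (a : ℚ) = n := by
      rw [hv]; field_simp
    exact_mod_cast this
  have hdvd : a ∣ n := ⟨x, by linarith [hxa, mul_comm x a]⟩
  have : (a : ℤ) ∣ (Int.gcd n a : ℤ) := Int.dvd_coe_gcd hdvd dvd_rfl
  rw [hcop] at this
  have ha1 : a = 1 := by
    rcases Int.isUnit_iff.mp (isUnit_of_dvd_one this) with h1 | h1
    · exact h1
    · omega
  refine ⟨ha1, ?_⟩
  subst ha1
  omega

lemma isHJ_tail {n a e : ℤ} {E : List ℤ} (h : IsHJ n a (e :: E)) (hE : E ≠ [])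
    (ha : 0 < a) (hcop : Int.gcd n a = 1) :
    IsHJ a (e * a - n) E ∧ 0 < e * a - n ∧ e * a - n < a ∧ Int.gcd a (e * a - n) = 1 := by
  obtain ⟨hge, hval⟩ := h
  have hE2 : ∀ x ∈ E, 2 ≤ x := fun x hx => hge x (List.mem_cons_of_mem _ hx)
  have ht : 1 < hjVal E := hjVal_gt_one E hE hE2
  have ht0 : hjVal E ≠ 0 := by linarith
  rw [hjVal_cons] at hval
  have ha0 : (a : ℚ) ≠ 0 := by exact_mod_cast ha.ne'
  have haq : (0:ℚ) < (a:ℚ) := by exact_mod_cast ha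
  have hinv : (hjVal E)⁻¹ = ((e * a - n : ℤ) : ℚ) / (a : ℚ) := by
    have h1 : (hjVal E)⁻¹ = (e : ℚ) - (n : ℚ) / (a : ℚ) := by linarith
    rw [h1]; push_cast; field_simp
  have hp : (0:ℚ) < (hjVal E)⁻¹ := inv_pos.mpr (by linarith)
  have hl : (hjVal E)⁻¹ < 1 := inv_lt_one_of_one_lt₀ ht
  have hb0 : 0 < e * a - n := by
    have : (0:ℚ) < ((e * a - n : ℤ) : ℚ) := by
      rw [hinv] at hp
      exact (div_pos_iff.mp hp).resolve_right (fun ⟨_, h⟩ => absurd haq (not_lt.mpr h.le)) |>.1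
    exact_mod_cast this
  have hblt : e * a - n < a := by
    have : ((e * a - n : ℤ) : ℚ) < (a : ℚ) := by
      rw [hinv] at hl
      calc ((e*a-n:ℤ):ℚ) = ((e*a-n:ℤ):ℚ)/(a:ℚ) * a := by field_simp
        _ < 1 * a := by
            apply mul_lt_mul_of_pos_right hl haq
        _ = a := one_mul _
    exact_mod_cast this
  have hbq : ((e * a - n : ℤ) : ℚ) ≠ 0 := by
    exact_mod_cast hb0.ne'
  have hvalE : hjVal E = (a : ℚ) / ((e * a - n : ℤ) : ℚ) := by
    rw [← inv_inv (hjVal E), hinv, inv_div]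
  refine ⟨⟨hE2, hvalE⟩, hb0, hblt, gcd_one_linear n a e hcop⟩

lemma getLast!_cons {x : ℤ} {L : List ℤ} (h : L ≠ []) :
    (x :: L).getLast! = L.getLast! := by
  cases L with
  | nil => exact absurd rfl h
  | cons y ys => simp [List.getLast!, List.getLast_cons]

lemma isHJ_rep : ∀ (E : List ℤ), (∀ e ∈ E, 2 ≤ e) → ∀ m : ℕ,
    hjVal E = ((m : ℚ) + 1) / (m : ℚ) → E = List.replicate m 2 := by
  intro E
  induction E with
  | nil =>
    intro _ m hm
    have h0 : hjVal ([] : List ℤ) = 0 := rfl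
    rw [h0] at hm
    rcases Nat.eq_zero_or_pos m with rfl | hm0
    · rfl
    · exfalso
      have hq : (0:ℚ) < (m:ℚ) := by exact_mod_cast hm0
      have : (0:ℚ) < ((m:ℚ)+1)/(m:ℚ) := by positivity
      rw [← hm] at this; exact lt_irrefl 0 this
  | cons y ys ih =>
    intro hge m hm
    have hy : 2 ≤ y := hge y (List.mem_cons_self)
    have hys : ∀ e ∈ ys, 2 ≤ e := fun e he => hge e (List.mem_cons_of_mem _ he)
    have hgt : 1 < hjVal (y :: ys) := hjVal_gt_one _ (by simp) hge
    have hm0 : m ≠ 0 := by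
      rintro rfl
      rw [hm] at hgt; norm_num at hgt
    obtain ⟨m', rfl⟩ : ∃ m', m = m' + 1 := ⟨m - 1, by omega⟩
    push_cast at hm
    have hmq : (0:ℚ) < ((m' : ℚ) + 1) := by positivity
    have hle2 : hjVal (y :: ys) ≤ 2 := by
      rw [hm]
      rw [div_le_iff₀ hmq]
      push_cast
      ring_nf
      nlinarith [Nat.cast_nonneg (α := ℚ) m']
    have hinvnn : 0 ≤ (hjVal ys)⁻¹ := hjVal_inv_nonneg ys hys
    rw [hjVal_cons] at hm hgt hle2
    have hy2 : y = 2 := by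
      have hub : (y : ℚ) < 3 := by
        rcases eq_or_ne ys [] with rfl | hne
        · have : hjVal ([] : List ℤ) = 0 := rfl
          rw [this] at hle2; norm_num at hle2
          linarith
        · have := hjVal_inv_lt_one ys hne hys
          linarith
      have : (2:ℚ) ≤ (y:ℚ) := by exact_mod_cast hy
      have h3 : y < 3 := by exact_mod_cast hub
      omega
    subst hy2
    rcases eq_or_ne ys [] with rfl | hne
    · -- 2 = (m'+2)/(m'+1) ⇒ m' = 0
      have h0 : hjVal ([] : List ℤ) = 0 := rfl
      rw [h0] at hm
      norm_num at hm
      have : (2:ℚ) * ((m':ℚ)+1) = (m':ℚ)+1+1 := by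
        rw [eq_div_iff hmq.ne'] at hm
        push_cast at hm ⊢
        linarith
      have hm'0 : (m' : ℚ) = 0 := by linarith
      have : m' = 0 := by exact_mod_cast hm'0
      subst this
      rfl
    · have htys : 1 < hjVal ys := hjVal_gt_one ys hne hys
      have hinv : (hjVal ys)⁻¹ = (m' : ℚ) / ((m' : ℚ) + 1) := by
        have : (hjVal ys)⁻¹ = 2 - ((m':ℚ)+1+1)/((m':ℚ)+1) := by
          push_cast at hm ⊢
          linarith
        rw [this]
        field_simp
        ring
      have hm'pos : 0 < m' := by
        by_contra h
        have : m' = 0 := by omega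
        subst this
        simp at hinv
        rw [hinv] at htys
        norm_num at htys
      have hm'q : (0:ℚ) < (m' : ℚ) := by exact_mod_cast hm'pos
      have hys_val : hjVal ys = ((m' : ℚ) + 1) / (m' : ℚ) := by
        rw [← inv_inv (hjVal ys), hinv, inv_div]
      rw [ih hys m' hys_val, List.replicate_succ]

lemma rep_blowdown : ∀ (m : ℕ) (l T : List ℤ) (d v : ℤ),
    Relation.ReflTransGen BDStep (l ++ d :: 1 :: (List.replicate m 2 ++ v :: T))
      (l ++ (d - 1 - (m : ℤ)) :: (v - 1) :: T) := by
  intro m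
  induction m with
  | zero =>
    intro l T d v
    have h := BDStep.mid l T d v
    have e1 : l ++ d :: 1 :: (List.replicate 0 2 ++ v :: T) = l ++ d :: 1 :: v :: T := by simp
    have e2 : l ++ (d - 1 - ((0:ℕ) : ℤ)) :: (v - 1) :: T = l ++ (d - 1) :: (v - 1) :: T := by
      norm_num
    rw [e1, e2]
    exact Relation.ReflTransGen.single h
  | succ m ih =>
    intro l T d v
    have h := BDStep.mid l (List.replicate m 2 ++ v :: T) d 2
    have e1 : l ++ d :: 1 :: (List.replicate (m+1) 2 ++ v :: T)
        = l ++ d :: 1 :: 2 :: (List.replicate m 2 ++ v :: T) := by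
      simp [List.replicate_succ]
    have e2 : l ++ (d - 1) :: ((2:ℤ) - 1) :: (List.replicate m 2 ++ v :: T)
        = l ++ (d - 1) :: 1 :: (List.replicate m 2 ++ v :: T) := by norm_num
    rw [e1]
    rw [e2] at h
    refine Relation.ReflTransGen.head h ?_
    have e3 : d - 1 - 1 - (m : ℤ) = d - 1 - ((m + 1 : ℕ) : ℤ) := by push_cast; ring
    rw [← e3]
    exact ih l T (d - 1) v

lemma mainE : ∀ (k : ℕ) (n a : ℤ) (E X : List ℤ),
    IsHJ n a E → IsHJ n (n - a) X → 0 < a → a < n → Int.gcd n a = 1 →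
    E.length + X.length ≤ k →
    ∀ (l T : List ℤ) (c v : ℤ),
      Relation.ReflTransGen BDStep
        (l ++ (c + X.getLast!) :: (X.dropLast.reverse ++ 1 :: (E ++ v :: T)))
        (l ++ c :: (v - 1) :: T) := by
  intro k
  induction k with
  | zero =>
    intro n a E X hE hX ha han hcop hlen
    have hEne : E ≠ [] := isHJ_ne_nil hE ha han
    cases E with
    | nil => exact absurd rfl hEne
    | cons e E' => simp at hlen
  | succ k ih =>
    intro n a E X hE hX ha han hcop hlen l T c v
    have han' : 0 < n - a := by linarith
    have hana : n - a < n := by linarith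
    have hcop' : Int.gcd n (n - a) = 1 := by
      have h1 : Int.gcd a n = 1 := by rw [Int.gcd_comm]; exact hcop
      have h2 := gcd_one_linear a n 1 h1
      rwa [one_mul] at h2
    have hEne : E ≠ [] := isHJ_ne_nil hE ha han
    have hXne : X ≠ [] := isHJ_ne_nil hX han' hana
    obtain ⟨e, E', rfl⟩ : ∃ e E', E = e :: E' := by
      cases E with
      | nil => exact absurd rfl hEne
      | cons e E' => exact ⟨e, E', rfl⟩
    obtain ⟨x, X', rfl⟩ : ∃ x X', X = x :: X' := by
      cases X with
      | nil => exact absurd rfl hXne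
      | cons x X' => exact ⟨x, X', rfl⟩
    have haq : (0:ℚ) < (a:ℚ) := by exact_mod_cast ha
    have hnaq : (0:ℚ) < ((n - a : ℤ):ℚ) := by exact_mod_cast han'
    rcases eq_or_ne X' [] with rfl | hX'ne
    · -- base case : X = [x], so n - a = 1 and x = n, E = replicate (n-1) 2
      obtain ⟨hna1, hxn⟩ := isHJ_singleton hX han' hcop'
      have haeq : a = n - 1 := by omega
      have hn2 : 2 ≤ n := by omega
      have hm : (e :: E') = List.replicate (n - 1).toNat 2 := by
        apply isHJ_rep _ hE.1
        have hc : (((n-1).toNat : ℕ) : ℚ) = ((n : ℚ) - 1) := by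
          have hZ : (((n-1).toNat : ℕ) : ℤ) = n - 1 := Int.toNat_of_nonneg (by omega)
          exact_mod_cast hZ
        rw [hc, hE.2, haeq]
        have haq0 : ((n:ℚ) - 1) ≠ 0 := by
          have : (2:ℚ) ≤ (n:ℚ) := by exact_mod_cast hn2
          linarith
        push_cast
        field_simp
        ring
      have hgl : ([x] : List ℤ).getLast! = x := rfl
      have hdl : ([x] : List ℤ).dropLast = [] := rfl
      rw [hgl, hdl, hm]
      simp only [List.reverse_nil, List.nil_append]
      have key := rep_blowdown (n - 1).toNat l T (c + x) v
      have heq : c + x - 1 - (((n-1).toNat : ℕ) : ℤ) = c := by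
        rw [Int.toNat_of_nonneg (by omega)]
        omega
      rw [heq] at key
      exact key
    · -- X' ≠ []
      obtain ⟨hX'hj, hb0, hblt, hbg⟩ := isHJ_tail hX hX'ne han' hcop'
      have hx2 : 2 ≤ x := hX.1 x (List.mem_cons_self)
      have hE2 : ∀ y ∈ E', 2 ≤ y := fun y hy => hE.1 y (List.mem_cons_of_mem _ hy)
      have hX2 : ∀ y ∈ X', 2 ≤ y := fun y hy => hX.1 y (List.mem_cons_of_mem _ hy)
      have hlenE : (e :: E').length + (x :: X').length ≤ k + 1 := hlen
      rcases eq_or_ne x 2 with rfl | hxne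
      · -- x = 2 : recurse on (e-1)::E' , X' with n₁ = n - a, a₁ = a
        have h2a : 2 * a < n := by nlinarith [hb0]
        have hinvnn : 0 ≤ (hjVal E')⁻¹ := hjVal_inv_nonneg E' hE2
        have hval := hE.2
        rw [hjVal_cons] at hval
        have hna2 : (2:ℚ) < (n:ℚ)/(a:ℚ) := by
          rw [lt_div_iff₀ haq]
          exact_mod_cast h2a
        have he3 : 3 ≤ e := by
          have h2e : (2:ℚ) < (e:ℚ) := by linarith
          have h2e' : (2:ℤ) < e := by exact_mod_cast h2e
          omega
        have hE1 : IsHJ (n - a) a ((e - 1) :: E') := by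
          constructor
          · intro y hy
            rcases List.mem_cons.mp hy with rfl | hy'
            · omega
            · exact hE2 y hy'
          · rw [hjVal_cons]
            push_cast
            have hrw : ((n:ℚ) - (a:ℚ)) / (a:ℚ) = (n:ℚ)/(a:ℚ) - 1 := by field_simp
            rw [hrw]
            linarith
        have hX1 : IsHJ (n - a) ((n - a) - a) X' := by
          have hrw : (n - a) - a = 2 * (n - a) - n := by ring
          rw [hrw]
          exact hX'hj
        have hg2 : Int.gcd (n - a) a = 1 := by
          have h1 := gcd_one_linear n (n - a) 1 hcop'
          have hrw : 1 * (n - a) - n = -a := by ring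
          rw [hrw, gcd_neg_right] at h1
          exact h1
        have hlt : a < n - a := by omega
        have hlen' : ((e - 1) :: E').length + X'.length ≤ k := by
          simp only [List.length_cons] at hlenE ⊢
          omega
        have key := ih (n - a) a ((e - 1) :: E') X' hE1 hX1 ha hlt hg2 hlen' l T c v
        have hgl : (2 :: X').getLast! = X'.getLast! := getLast!_cons hX'ne
        have hdl : (2 :: X').dropLast = 2 :: X'.dropLast := List.dropLast_cons_of_ne_nil hX'ne
        rw [hgl, hdl]
        refine Relation.ReflTransGen.head ?_ key
        have step := BDStep.mid (l ++ (c + X'.getLast!) :: X'.dropLast.reverse) (E' ++ v :: T) 2 e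
        have e1 : l ++ (c + X'.getLast!) :: ((2 :: X'.dropLast).reverse ++ 1 :: (e :: E' ++ v :: T))
            = (l ++ (c + X'.getLast!) :: X'.dropLast.reverse) ++ 2 :: 1 :: e :: (E' ++ v :: T) := by
          simp
        have e2 : (l ++ (c + X'.getLast!) :: X'.dropLast.reverse) ++ ((2:ℤ) - 1) :: (e - 1) :: (E' ++ v :: T)
            = l ++ (c + X'.getLast!) :: (X'.dropLast.reverse ++ 1 :: ((e - 1) :: E' ++ v :: T)) := by
          norm_num
        rw [e1, ← e2]
        exact step
      · -- x ≥ 3 : recurse on E', (x-1)::X' with n₂ = a, a₂ = 2a - n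
        have hx3 : 3 ≤ x := by omega
        have htX : 1 < hjVal X' := hjVal_gt_one X' hX'ne hX2
        have hvalX := hX.2
        rw [hjVal_cons] at hvalX
        have hinvX : (hjVal X')⁻¹ < 1 := inv_lt_one_of_one_lt₀ htX
        have hgt2 : (2:ℚ) < (n:ℚ)/((n - a : ℤ):ℚ) := by
          have : (3:ℚ) ≤ (x:ℚ) := by exact_mod_cast hx3
          linarith
        have h2a : n < 2 * a := by
          rw [lt_div_iff₀ hnaq] at hgt2
          push_cast at hgt2
          have hq : (n:ℚ) < 2 * (a:ℚ) := by linarith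
          exact_mod_cast hq
        have hE'ne : E' ≠ [] := by
          rintro rfl
          obtain ⟨ha1, rfl⟩ := isHJ_singleton hE ha hcop
          omega
        have htE : 1 < hjVal E' := hjVal_gt_one E' hE'ne hE2
        have hvalE := hE.2
        rw [hjVal_cons] at hvalE
        have hinvE : (hjVal E')⁻¹ < 1 := inv_lt_one_of_one_lt₀ htE
        have hna2 : (n:ℚ)/(a:ℚ) < 2 := by
          rw [div_lt_iff₀ haq]
          exact_mod_cast h2a
        have he2 : e = 2 := by
          have hub : (e:ℚ) < 3 := by linarith
          have hlb : 2 ≤ e := hE.1 e (List.mem_cons_self)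
          have : e < 3 := by exact_mod_cast hub
          omega
        subst he2
        obtain ⟨hE'hj, hc0, hclt, hcg⟩ := isHJ_tail hE hE'ne ha hcop
        have hX2' : IsHJ a (a - (2 * a - n)) ((x - 1) :: X') := by
          constructor
          · intro y hy
            rcases List.mem_cons.mp hy with rfl | hy'
            · omega
            · exact hX2 y hy'
          · rw [hjVal_cons]
            have hna0 : (n:ℚ) - (a:ℚ) ≠ 0 := by
              have : (0:ℚ) < (n:ℚ) - (a:ℚ) := by push_cast at hnaq; linarith
              linarith
            have h3 : (n:ℚ)/((n:ℚ) - (a:ℚ)) = (a:ℚ)/((n:ℚ) - (a:ℚ)) + 1 := by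
              field_simp
              ring
            push_cast
            push_cast at hvalX
            have h4 : (a:ℚ) - (2*(a:ℚ) - (n:ℚ)) = (n:ℚ) - (a:ℚ) := by ring
            rw [h4]
            linarith [h3, hvalX]
        have hE'hj2 : IsHJ a (2 * a - n) E' := by
          have hrw : 2 * a - n = 2 * a - n := rfl
          exact hE'hj
        have hlen' : E'.length + ((x - 1) :: X').length ≤ k := by
          simp only [List.length_cons] at hlenE ⊢
          omega
        have key := ih a (2 * a - n) E' ((x - 1) :: X') hE'hj2 hX2' hc0 hclt hcg hlen' l T c v
        have hgl : (x :: X').getLast! = X'.getLast! := getLast!_cons hX'ne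
        have hgl2 : ((x - 1) :: X').getLast! = X'.getLast! := getLast!_cons hX'ne
        have hdl : (x :: X').dropLast = x :: X'.dropLast := List.dropLast_cons_of_ne_nil hX'ne
        have hdl2 : ((x - 1) :: X').dropLast = (x - 1) :: X'.dropLast :=
          List.dropLast_cons_of_ne_nil hX'ne
        rw [hgl, hdl]
        rw [hgl2, hdl2] at key
        refine Relation.ReflTransGen.head ?_ key
        have step := BDStep.mid (l ++ (c + X'.getLast!) :: X'.dropLast.reverse) (E' ++ v :: T) x 2
        have e1 : l ++ (c + X'.getLast!) :: ((x :: X'.dropLast).reverse ++ 1 :: (2 :: E' ++ v :: T))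
            = (l ++ (c + X'.getLast!) :: X'.dropLast.reverse) ++ x :: 1 :: 2 :: (E' ++ v :: T) := by
          simp
        have e2 : (l ++ (c + X'.getLast!) :: X'.dropLast.reverse) ++ (x - 1) :: ((2:ℤ) - 1) :: (E' ++ v :: T)
            = l ++ (c + X'.getLast!) :: (((x - 1) :: X'.dropLast).reverse ++ 1 :: (E' ++ v :: T)) := by
          norm_num
        rw [e1, ← e2]
        exact step

lemma getLast!_concat (M : List ℤ) (b : ℤ) : (M ++ [b]).getLast! = b := by
  induction M with
  | nil => rfl
  | cons y ys ih =>
    rw [List.cons_append, getLast!_cons (by simp), ih]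

lemma dropLast_getLast! (E : List ℤ) (h : E ≠ []) : E.dropLast ++ [E.getLast!] = E := by
  rcases List.eq_nil_or_concat E with rfl | ⟨M, b, hMb⟩
  · exact absurd rfl h
  · rw [List.concat_eq_append] at hMb
    subst hMb
    rw [getLast!_concat, List.dropLast_concat]

/-- Sliding: if `n/a = [e₁,…,e_{i-1}]` (the first `j = i-1` entries of `L`) and
`n/(n-a) = [x₁,…,x_u]`, then
`[e₁,…,e_{i-1}+x_u, x_{u-1},…,x₁, 1, e₁,…,e_r]` blows down to
`[e₁,…,e_{i-1}, e_i - 1, e_{i+1},…,e_r]`. -/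
theorem stmt5 (L X : List ℤ) (hL : ∀ e ∈ L, 2 ≤ e)
    (n a : ℤ) (j : ℕ) (hj1 : 1 ≤ j) (hjr : j < L.length)
    (ha : 0 < a) (han : a < n) (hcop : Int.gcd n a = 1)
    (hpre : IsHJ n a (L.take j)) (hX : IsHJ n (n - a) X) :
    Relation.ReflTransGen BDStep
      ((L.take j).dropLast ++ ((L.take j).getLast! + X.getLast!) ::
          (X.dropLast.reverse ++ 1 :: L))
      (L.take j ++ (L.getD j 0 - 1) :: L.drop (j + 1)) := by
  have hEne : L.take j ≠ [] := isHJ_ne_nil hpre ha han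
  have hsplit : L = L.take j ++ (L.getD j 0 :: L.drop (j+1)) := by
    conv_lhs => rw [← List.take_append_drop j L]
    congr 1
    rw [List.drop_eq_getElem_cons hjr, List.getD_eq_getElem L 0 hjr]
  have key := mainE ((L.take j).length + X.length) n a (L.take j) X hpre hX ha han hcop le_rfl
    (L.take j).dropLast (L.drop (j+1)) (L.take j).getLast! (L.getD j 0)
  have hsrc : (1:ℤ) :: L = 1 :: (L.take j ++ L.getD j 0 :: L.drop (j+1)) := by rw [← hsplit]
  rw [hsrc]
  have hgoal : L.take j ++ (L.getD j 0 - 1) :: L.drop (j+1)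
      = (L.take j).dropLast ++ (L.take j).getLast! :: ((L.getD j 0 - 1) :: L.drop (j+1)) := by
    conv_lhs => rw [← dropLast_getLast! (L.take j) hEne]
    rw [List.append_assoc]
    rfl
  rw [hgoal]
  exact key
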